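/- Let G be a subgroup of Homeo₊(ℝ) without crossed elements. Suppose there exists an infinite tower {(Iᵢ, fᵢ)} for G, i.e., a strictly increasing sequence of closed bounded intervals I₁ ⊊ I₂ ⊊ ⋯ and elements fᵢ ∈ G with Fix(fᵢ) ∩ Iᵢ equal to the set of endpoints of Iᵢ, such that ⋃ᵢ Iᵢ = ℝ. Then G admits no invariant Radon measure on ℝ. -/

import Mathlib

open Set MeasureTheory
open scoped NNReal

/-- Orientation-preserving homeomorphisms of ℝ, modelled as order-isomorphisms of ℝ
(every order-isomorphism of ℝ is a strictly increasing homeomorphism and conversely). -/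
abbrev HomeoR := ℝ ≃o ℝ

/-- The fixed point set of `f`. -/
def FixSet (f : HomeoR) : Set ℝ := {x : ℝ | f x = x}

/-- `f` and `g` are crossed with `f` in the distinguished role: there is an interval
`(a,b)` with endpoints possibly `±∞` such that `Fix(f) ∩ [a,b] = {a,b}` while `g`
maps `a` or `b` into `(a,b)`. -/
def CrossedAt (f g : HomeoR) : Prop :=
  ∃ a b : EReal, a < b ∧
    ({x : ℝ | a ≤ (x : EReal) ∧ (x : EReal) ≤ b} ∩ FixSet f
      = {x : ℝ | (x : EReal) = a ∨ (x : EReal) = b}) ∧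
    (∃ x : ℝ, ((x : EReal) = a ∨ (x : EReal) = b) ∧
      a < (g x : EReal) ∧ (g x : EReal) < b)

/-- Two elements are crossed. -/
def Crossed (f g : HomeoR) : Prop := CrossedAt f g ∨ CrossedAt g f

/-- `μ` is a (nonzero) `G`-invariant Radon measure on ℝ. -/
def InvariantRadon (G : Subgroup HomeoR) (μ : Measure ℝ) : Prop :=
  μ ≠ 0 ∧ IsFiniteMeasureOnCompacts μ ∧ ∀ g ∈ G, Measure.map (⇑g) μ = μ

/-- `Λ` is a nonempty minimal closed `G`-invariant subset of ℝ. -/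
def MinimalSet (G : Subgroup HomeoR) (Λ : Set ℝ) : Prop :=
  Λ.Nonempty ∧ IsClosed Λ ∧ (∀ g ∈ G, ⇑g '' Λ = Λ) ∧
    ∀ Λ' ⊆ Λ, Λ'.Nonempty → IsClosed Λ' → (∀ g ∈ G, ⇑g '' Λ' = Λ') → Λ' = Λ


lemma fix_zpow (g : HomeoR) (u : ℝ) (hu : g u = u) : ∀ n : ℤ, (g ^ n) u = u := by
  have hinv : (g⁻¹ : HomeoR) u = u := by
    conv_lhs => rw [← hu]
    exact g.symm_apply_apply u
  intro n
  induction n using Int.induction_on with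
  | zero => rfl
  | succ k ih => rw [zpow_add_one]; show (g ^ (k:ℤ)) (g u) = u; rw [hu, ih]
  | pred k ih =>
      rw [show (-(k:ℤ) - 1) = -(k:ℤ) + (-1) from by ring, zpow_add, zpow_neg_one]
      show (g ^ (-(k:ℤ))) ((g⁻¹ : HomeoR) u) = u
      rw [hinv, ih]

lemma key (μ : Measure ℝ) (a b : ℝ) (g : HomeoR)
    (hinv : ∀ n : ℤ, Measure.map ⇑(g ^ n) μ = μ)
    (hfin : μ (Icc a b) ≠ ⊤)
    (ha : g a = a) (hb : g b = b)
    (x0 : ℝ) (hx0 : x0 ∈ Ioo a b) (hgx : x0 < g x0)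
    (hfixg : FixSet g ∩ Icc a b = {a, b}) :
    μ (Ioo a b) = 0 := by
  set x : ℤ → ℝ := fun n => (g ^ n) x0 with hxdef
  have hx0' : x 0 = x0 := rfl
  have hxsucc : ∀ n : ℤ, x (n + 1) = (g ^ n) (g x0) := by
    intro n; show (g ^ (n+1)) x0 = _; rw [zpow_add_one]; rfl
  have hxsucc' : ∀ n : ℤ, x (n + 1) = g (x n) := by
    intro n; show (g ^ (n+1)) x0 = g ((g ^ n) x0)
    rw [show n + 1 = 1 + n from by ring, zpow_add, zpow_one]; rfl
  have hx1 : x 1 = g x0 := by simpa [hx0'] using hxsucc' 0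
  have hxmono : StrictMono x := by
    have hstep : ∀ n : ℤ, x n < x (n + 1) := by
      intro n; rw [hxsucc]; exact (g ^ n).strictMono hgx
    exact strictMono_int_of_lt_succ hstep
  have hxIoo : ∀ n : ℤ, x n ∈ Ioo a b := by
    intro n
    constructor
    · have := (g ^ n).strictMono hx0.1
      rwa [fix_zpow g a ha n] at this
    · have := (g ^ n).strictMono hx0.2
      rwa [fix_zpow g b hb n] at this
  -- sup and inf of the orbit
  have hS : range x ⊆ Ioo a b := by rintro _ ⟨n, rfl⟩; exact hxIoo n
  have hSne : (range x).Nonempty := ⟨x 0, mem_range_self 0⟩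
  have hbdd : BddAbove (range x) := ⟨b, fun y hy => le_of_lt (hS hy).2⟩
  have hbddb : BddBelow (range x) := ⟨a, fun y hy => le_of_lt (hS hy).1⟩
  have himg : ⇑g '' range x = range x := by
    ext y
    constructor
    · rintro ⟨_, ⟨n, rfl⟩, rfl⟩
      exact ⟨n + 1, hxsucc' n⟩
    · rintro ⟨n, rfl⟩
      refine ⟨x (n - 1), ⟨n - 1, rfl⟩, ?_⟩
      rw [← hxsucc' (n - 1), sub_add_cancel]
  have hsup : sSup (range x) = b := by
    have hfixL : g (sSup (range x)) = sSup (range x) := by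
      rw [g.map_csSup' hSne hbdd, himg]
    have hmem : sSup (range x) ∈ FixSet g ∩ Icc a b := by
      refine ⟨hfixL, le_trans (le_of_lt hx0.1) (le_csSup hbdd ⟨0, rfl⟩), ?_⟩
      exact csSup_le hSne fun y hy => le_of_lt (hS hy).2
    rw [hfixg] at hmem
    rcases hmem with h | h
    · exfalso
      have := le_csSup hbdd (⟨0, rfl⟩ : x0 ∈ range x)
      rw [h] at this; exact absurd (lt_of_lt_of_le hx0.1 this) (lt_irrefl a)
    · exact h
  have hinf : sInf (range x) = a := by
    have hfixL : g (sInf (range x)) = sInf (range x) := by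
      rw [g.map_csInf' hSne hbddb, himg]
    have hmem : sInf (range x) ∈ FixSet g ∩ Icc a b := by
      refine ⟨hfixL, le_csInf hSne fun y hy => le_of_lt (hS hy).1, ?_⟩
      exact le_trans (csInf_le hbddb ⟨0, rfl⟩) (le_of_lt hx0.2)
    rw [hfixg] at hmem
    rcases hmem with h | h
    · exact h
    · exfalso
      have := csInf_le hbddb (⟨0, rfl⟩ : x0 ∈ range x)
      rw [h] at this; exact absurd (lt_of_le_of_lt this hx0.2) (lt_irrefl b)
  -- cover
  have hcov : Ioo a b = ⋃ n : ℤ, Ico (x n) (x (n + 1)) := by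
    ext z
    simp only [mem_iUnion, mem_Ico, mem_Ioo]
    constructor
    · rintro ⟨haz, hzb⟩
      obtain ⟨-, ⟨m, rfl⟩, hm⟩ := exists_lt_of_lt_csSup hSne (hsup ▸ hzb)
      obtain ⟨-, ⟨n0, rfl⟩, hn0⟩ := exists_lt_of_csInf_lt hSne (hinf ▸ haz)
      have hbddT : ∀ k : ℤ, x k ≤ z → k ≤ m := by
        intro k hk
        by_contra hkm
        push_neg at hkm
        exact absurd (lt_of_le_of_lt hk hm) (not_lt.mpr (le_of_lt (hxmono hkm)))
      obtain ⟨k, hk, hgrt⟩ := Int.exists_greatest_of_bdd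
        (P := fun k => x k ≤ z) ⟨m, hbddT⟩ ⟨n0, hn0.le⟩
      refine ⟨k, hk, ?_⟩
      by_contra hzk
      push_neg at hzk
      exact absurd (hgrt (k + 1) hzk) (by omega)
    · rintro ⟨n, hn1, hn2⟩
      exact ⟨lt_of_lt_of_le (hxIoo n).1 hn1, lt_trans hn2 (hxIoo (n + 1)).2⟩
  -- measure of each piece equals c
  set c : ENNReal := μ (Ico (x 0) (x 1)) with hc
  have hmeas : ∀ n : ℤ, Measurable ⇑(g ^ n) := fun n => (g ^ n).toHomeomorph.continuous.measurable
  have hpiece : ∀ n : ℤ, μ (Ico (x n) (x (n + 1))) = c := by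
    intro n
    have h1 : x n = (g ^ n) (x 0) := rfl
    have h2 : x (n + 1) = (g ^ n) (x 1) := hxsucc n
    have hpre : ⇑(g ^ n) ⁻¹' Ico (x n) (x (n + 1)) = Ico (x 0) (x 1) := by
      ext z
      simp only [mem_preimage, mem_Ico, h1, h2]
      rw [(g ^ n).le_iff_le, (g ^ n).lt_iff_lt]
    calc μ (Ico (x n) (x (n + 1)))
        = (Measure.map ⇑(g ^ n) μ) (Ico (x n) (x (n + 1))) := by rw [hinv n]
      _ = μ (⇑(g ^ n) ⁻¹' Ico (x n) (x (n + 1))) := Measure.map_apply (hmeas n) measurableSet_Ico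
      _ = c := by rw [hpre]
  have hdisj : Pairwise (Function.onFun Disjoint fun n : ℤ => Ico (x n) (x (n + 1))) := by
    intro i j hij
    rcases lt_or_gt_of_ne hij with h | h
    · exact Set.Ico_disjoint_Ico.mpr
        (le_trans (min_le_left _ _)
          (le_trans (hxmono.le_iff_le.mpr (by omega)) (le_max_right _ _)))
    · exact Set.Ico_disjoint_Ico.mpr
        (le_trans (min_le_right _ _)
          (le_trans (hxmono.le_iff_le.mpr (by omega)) (le_max_left _ _)))
  have hμIoo : μ (Ioo a b) = ∑' _ : ℤ, c := by
    rw [hcov, measure_iUnion hdisj fun n => measurableSet_Ico]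
    exact tsum_congr hpiece
  have hc0 : c = 0 := by
    by_contra hc0
    have := ENNReal.tsum_const_eq_top_of_ne_zero (α := ℤ) hc0
    rw [← hμIoo] at this
    exact hfin (top_unique (this ▸ measure_mono (Ioo_subset_Icc_self)))
  rw [hμIoo, hc0, tsum_zero]

theorem tower_no_invariant_radon (G : Subgroup HomeoR)
    (hnc : ∀ f ∈ G, ∀ g ∈ G, ¬ Crossed f g)
    (a b : ℕ → ℝ) (f : ℕ → HomeoR)
    (hmem : ∀ i, f i ∈ G)
    (hab : ∀ i, a i < b i)
    (hnest : ∀ i, Icc (a i) (b i) ⊂ Icc (a (i+1)) (b (i+1)))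
    (hfix : ∀ i, FixSet (f i) ∩ Icc (a i) (b i) = {a i, b i})
    (hcover : (⋃ i, Icc (a i) (b i)) = univ) :
    ¬ ∃ μ : Measure ℝ, InvariantRadon G μ := by
  rintro ⟨μ, hμ0, hμc, hμinv⟩
  -- monotonicity of endpoints
  have hstep : ∀ i, a (i+1) ≤ a i ∧ b i ≤ b (i+1) := by
    intro i
    have hsub := (hnest i).1
    exact (Icc_subset_Icc_iff (le_of_lt (hab i))).mp hsub
  have hamono : Antitone a := antitone_nat_of_succ_le fun i => (hstep i).1
  have hbmono : Monotone b := monotone_nat_of_le_succ fun i => (hstep i).2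
  -- each open interval has measure zero
  have hzero : ∀ i, μ (Ioo (a i) (b i)) = 0 := by
    intro i
    set x0 : ℝ := (a i + b i) / 2 with hx0def
    have hx0 : x0 ∈ Ioo (a i) (b i) := ⟨by rw [hx0def]; linarith [hab i], by rw [hx0def]; linarith [hab i]⟩
    have hfa : f i (a i) = a i := by
      have : a i ∈ FixSet (f i) ∩ Icc (a i) (b i) := by
        rw [hfix i]; exact Or.inl rfl
      exact this.1
    have hfb : f i (b i) = b i := by
      have : b i ∈ FixSet (f i) ∩ Icc (a i) (b i) := by
        rw [hfix i]; exact Or.inr rfl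
      exact this.1
    have hne : f i x0 ≠ x0 := by
      intro h
      have : x0 ∈ FixSet (f i) ∩ Icc (a i) (b i) :=
        ⟨h, le_of_lt hx0.1, le_of_lt hx0.2⟩
      rw [hfix i] at this
      rcases this with h' | h'
      · exact absurd (h' ▸ hx0.1) (lt_irrefl _)
      · exact absurd (h' ▸ hx0.2) (lt_irrefl _)
    have hfin : μ (Icc (a i) (b i)) ≠ ⊤ := (isCompact_Icc.measure_lt_top).ne
    -- choose g = f i or its inverse so that x0 < g x0
    rcases lt_or_gt_of_ne hne with hlt | hgt
    · -- f i x0 < x0, use the inverse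
      set g : HomeoR := (f i)⁻¹ with hgdef
      have hgG : g ∈ G := inv_mem (hmem i)
      have hfixg : FixSet g ∩ Icc (a i) (b i) = {a i, b i} := by
        have : FixSet g = FixSet (f i) := by
          ext z
          constructor
          · intro hz
            have : f i (g z) = f i z := congrArg (f i) hz
            rw [show f i (g z) = z from (f i).apply_symm_apply z] at this
            exact this.symm
          · intro hz
            show g z = z
            conv_lhs => rw [← hz]
            exact (f i).symm_apply_apply z
        rw [this, hfix i]
      have hga : g (a i) = a i := by
        show (f i).symm (a i) = a i
        conv_lhs => rw [← hfa]
        exact (f i).symm_apply_apply _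
      have hgb : g (b i) = b i := by
        show (f i).symm (b i) = b i
        conv_lhs => rw [← hfb]
        exact (f i).symm_apply_apply _
      have hgx : x0 < g x0 := by
        have := g.strictMono hlt
        rwa [show g (f i x0) = x0 from (f i).symm_apply_apply x0] at this
      exact key μ (a i) (b i) g
        (fun n => hμinv _ (zpow_mem hgG n)) hfin hga hgb x0 hx0 hgx hfixg
    · exact key μ (a i) (b i) (f i)
        (fun n => hμinv _ (zpow_mem (hmem i) n)) hfin hfa hfb x0 hx0 hgt (hfix i)
  -- conclude μ = 0
  apply hμ0
  have hcov' : (⋃ i, Ioo (a i) (b i)) = univ := by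
    apply eq_univ_of_forall
    intro z
    have h1 : ∃ i, z - 1 ∈ Icc (a i) (b i) := by
      have := hcover ▸ mem_univ (z - 1)
      simpa using (hcover.symm ▸ mem_univ (z - 1) : z - 1 ∈ ⋃ i, Icc (a i) (b i))
    have h2 : ∃ j, z + 1 ∈ Icc (a j) (b j) := by
      simpa using (hcover.symm ▸ mem_univ (z + 1) : z + 1 ∈ ⋃ i, Icc (a i) (b i))
    obtain ⟨i, hi⟩ := h1
    obtain ⟨j, hj⟩ := h2
    refine mem_iUnion.mpr ⟨max i j, ?_, ?_⟩
    · calc a (max i j) ≤ a i := hamono (le_max_left i j)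
        _ ≤ z - 1 := hi.1
        _ < z := by linarith
    · calc z < z + 1 := by linarith
        _ ≤ b j := hj.2
        _ ≤ b (max i j) := hbmono (le_max_right i j)
  have : μ univ = 0 := by
    rw [← hcov']
    exact measure_iUnion_null hzero
  exact Measure.measure_univ_eq_zero.mp this
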